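/- Let f : ℝⁿ → ℝ and g_i : ℝⁿ → ℝ, i = 1,…,m, be continuously differentiable. Let (x^k) ⊆ ℝⁿ converge to x̄ and (τ_k) be positive reals with τ_k → ∞, and suppose ‖∇f(x^k) + τ_k·Σ_{i=1}^m max(0, g_i(x^k))·∇g_i(x^k)‖ → 0. Assume x̄ is feasible (g_i(x̄) ≤ 0 for all i) and the LICQ holds at x̄, i.e., the gradients ∇g_i(x̄) for i with g_i(x̄) = 0 are linearly independent. Define λ^k ∈ ℝᵐ by λ^k_i = τ_k·max(0, g_i(x^k)). Then the sequence (λ^k) is bounded. -/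

import Mathlib

open Filter

set_option maxHeartbeats 1000000

lemma continuous_gradient' {E : Type*} [NormedAddCommGroup E] [InnerProductSpace ℝ E]
    [CompleteSpace E] {f : E → ℝ} (hf : ContDiff ℝ 1 f) :
    Continuous (gradient f) := by
  have h : Continuous fun x => fderiv ℝ f x := hf.continuous_fderiv one_ne_zero
  exact (InnerProductSpace.toDual ℝ E).symm.continuous.comp h

lemma exists_coeff_bound {E : Type*} [NormedAddCommGroup E] [NormedSpace ℝ E]
    {ι : Type*} [Fintype ι] {v : ι → E} (hv : LinearIndependent ℝ v) :
    ∃ c > 0, ∀ a : ι → ℝ, ∀ i, |a i| ≤ c * ‖∑ j, a j • v j‖ := by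
  set T := Fintype.linearCombination ℝ v with hT
  have hker : LinearMap.ker T = ⊥ := by
    rw [LinearMap.ker_eq_bot']
    intro a ha
    have := Fintype.linearIndependent_iff.mp hv a
    rw [hT] at ha
    simp [Fintype.linearCombination_apply] at ha
    funext i
    exact this ha i
  obtain ⟨K, hK0, hK⟩ := T.exists_antilipschitzWith hker
  refine ⟨K, hK0, fun a i => ?_⟩
  have h1 : ‖a‖ ≤ K * ‖T a‖ := by
    have := hK.le_mul_dist a 0
    simpa [dist_eq_norm] using this
  have h2 : |a i| ≤ ‖a‖ := by simpa using norm_le_pi_norm a i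
  calc |a i| ≤ ‖a‖ := h2
    _ ≤ K * ‖T a‖ := h1
    _ = K * ‖∑ j, a j • v j‖ := by rw [hT, Fintype.linearCombination_apply]

theorem stmt11 {n m : ℕ} (f : EuclideanSpace ℝ (Fin n) → ℝ)
    (g : Fin m → EuclideanSpace ℝ (Fin n) → ℝ)
    (hf : ContDiff ℝ 1 f) (hg : ∀ i, ContDiff ℝ 1 (g i))
    (x : ℕ → EuclideanSpace ℝ (Fin n)) (xbar : EuclideanSpace ℝ (Fin n))
    (hx : Tendsto x atTop (nhds xbar))
    (τ : ℕ → ℝ) (hτpos : ∀ k, 0 < τ k) (hτ : Tendsto τ atTop atTop)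
    (hgrad : Tendsto
      (fun k => ‖gradient f (x k) + τ k • ∑ i, max 0 (g i (x k)) • gradient (g i) (x k)‖)
      atTop (nhds 0))
    (hfeas : ∀ i, g i xbar ≤ 0)
    (hLICQ : LinearIndependent ℝ
      (fun i : {i : Fin m // g i xbar = 0} => gradient (g i.1) xbar))
    (lam : ℕ → Fin m → ℝ) (hlam : ∀ k i, lam k i = τ k * max 0 (g i (x k))) :
    ∃ M : ℝ, ∀ k i, |lam k i| ≤ M := by
  classical
  set V : ℕ → EuclideanSpace ℝ (Fin n) :=
    fun k => τ k • ∑ i, max 0 (g i (x k)) • gradient (g i) (x k) with hV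
  obtain ⟨c, hc, hcoeff⟩ := exists_coeff_bound hLICQ
  have hGf : Tendsto (fun k => gradient f (x k)) atTop (nhds (gradient f xbar)) :=
    ((continuous_gradient' hf).tendsto xbar).comp hx
  obtain ⟨C, hC⟩ := (hgrad.add hGf.norm).bddAbove_range
  have hVC : ∀ k, ‖V k‖ ≤ C := by
    intro k
    have h1 : ‖V k‖ ≤ ‖gradient f (x k) + V k‖ + ‖gradient f (x k)‖ := by
      have he : V k = (gradient f (x k) + V k) - gradient f (x k) := by abel
      calc ‖V k‖ = ‖(gradient f (x k) + V k) - gradient f (x k)‖ := by rw [← he]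
        _ ≤ ‖gradient f (x k) + V k‖ + ‖gradient f (x k)‖ :=
          norm_sub_le (gradient f (x k) + V k) (gradient f (x k))
    exact h1.trans (hC ⟨k, rfl⟩)
  have hC0 : 0 ≤ C := le_trans (norm_nonneg _) (hVC 0)
  have hVsum : ∀ k, V k = ∑ i, lam k i • gradient (g i) (x k) := by
    intro k
    show τ k • ∑ i, max 0 (g i (x k)) • gradient (g i) (x k) = _
    rw [Finset.smul_sum]
    exact Finset.sum_congr rfl fun i _ => by rw [hlam, smul_smul]
  have hinact : ∀ᶠ k in atTop, ∀ i, g i xbar ≠ 0 → lam k i = 0 := by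
    rw [eventually_all]
    intro i
    by_cases hi : g i xbar = 0
    · filter_upwards with k h; exact absurd hi h
    · have hlt : g i xbar < 0 := lt_of_le_of_ne (hfeas i) hi
      have ht : Tendsto (fun k => g i (x k)) atTop (nhds (g i xbar)) :=
        ((hg i).continuous.tendsto xbar).comp hx
      filter_upwards [ht.eventually_lt_const hlt] with k hk _
      rw [hlam, max_eq_left hk.le, mul_zero]
  have heps : Tendsto (fun k => ∑ i : {i : Fin m // g i xbar = 0},
      ‖gradient (g i.1) (x k) - gradient (g i.1) xbar‖) atTop (nhds 0) := by
    have hE : Continuous (fun y => ∑ i : {i : Fin m // g i xbar = 0},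
        ‖gradient (g i.1) y - gradient (g i.1) xbar‖) := by
      refine continuous_finset_sum _ fun i _ => ?_
      exact ((continuous_gradient' (hg i.1)).sub continuous_const).norm
    have := (hE.tendsto xbar).comp hx
    simpa [Function.comp_def] using this
  have heps' : ∀ᶠ k in atTop, (∑ i : {i : Fin m // g i xbar = 0},
      ‖gradient (g i.1) (x k) - gradient (g i.1) xbar‖) ≤ 1/(2*c) :=
    heps.eventually_le_const (by positivity)
  obtain ⟨N, hN⟩ := eventually_atTop.mp (hinact.and heps')
  have hkey : ∀ k, N ≤ k → ∀ i, |lam k i| ≤ 2*c*C := by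
    intro k hk
    obtain ⟨hk1, hk2⟩ := hN k hk
    set a : {i : Fin m // g i xbar = 0} → ℝ := fun i => lam k i.1 with ha
    have hVa : V k = ∑ i : {i : Fin m // g i xbar = 0}, a i • gradient (g i.1) (x k) := by
      rw [hVsum k,
        ← Finset.sum_subtype (Finset.univ.filter fun i => g i xbar = 0)
          (fun i => by simp) (fun i => lam k i • gradient (g i) (x k))]
      symm
      refine Finset.sum_filter_of_ne fun i _ hne => ?_
      by_contra hgi
      exact hne (by rw [hk1 i hgi, zero_smul])
    set W : EuclideanSpace ℝ (Fin n) :=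
      ∑ j : {i : Fin m // g i xbar = 0}, a j • gradient (g j.1) xbar with hWdef
    have hdiff : ‖V k - W‖ ≤ ‖a‖ * (1/(2*c)) := by
      rw [hVa, hWdef, ← Finset.sum_sub_distrib]
      calc ‖∑ i : {i : Fin m // g i xbar = 0},
            (a i • gradient (g i.1) (x k) - a i • gradient (g i.1) xbar)‖
          ≤ ∑ i : {i : Fin m // g i xbar = 0},
            ‖a i • gradient (g i.1) (x k) - a i • gradient (g i.1) xbar‖ :=
            norm_sum_le _ _
        _ ≤ ∑ i : {i : Fin m // g i xbar = 0},
            ‖a‖ * ‖gradient (g i.1) (x k) - gradient (g i.1) xbar‖ := by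
            refine Finset.sum_le_sum fun i _ => ?_
            rw [← smul_sub, norm_smul]
            exact mul_le_mul_of_nonneg_right (norm_le_pi_norm a i) (norm_nonneg _)
        _ = ‖a‖ * ∑ i : {i : Fin m // g i xbar = 0},
            ‖gradient (g i.1) (x k) - gradient (g i.1) xbar‖ := by
            rw [Finset.mul_sum]
        _ ≤ ‖a‖ * (1/(2*c)) := mul_le_mul_of_nonneg_left hk2 (norm_nonneg a)
    have hWb : ‖W‖ ≤ C + ‖a‖ * (1/(2*c)) := by
      calc ‖W‖ = ‖V k - (V k - W)‖ := by congr 1; abel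
        _ ≤ ‖V k‖ + ‖V k - W‖ := norm_sub_le _ _
        _ ≤ C + ‖a‖ * (1/(2*c)) := add_le_add (hVC k) hdiff
    have hai : ∀ i, |a i| ≤ c*C + ‖a‖/2 := by
      intro i
      have h1 := hcoeff a i
      have h2 : c * ‖W‖ ≤ c * (C + ‖a‖ * (1/(2*c))) := by gcongr
      have h3 : c * (C + ‖a‖ * (1/(2*c))) = c*C + ‖a‖/2 := by field_simp
      calc |a i| ≤ c * ‖W‖ := h1
        _ ≤ c*C + ‖a‖/2 := by rw [← h3]; exact h2
    have hna : ‖a‖ ≤ c*C + ‖a‖/2 :=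
      (pi_norm_le_iff_of_nonneg (by positivity)).mpr fun i => by
        rw [Real.norm_eq_abs]; exact hai i
    have hna2 : ‖a‖ ≤ 2*c*C := by linarith
    intro i
    by_cases hi : g i xbar = 0
    · have hb : |a ⟨i, hi⟩| ≤ ‖a‖ := by simpa using norm_le_pi_norm a ⟨i, hi⟩
      calc |lam k i| = |a ⟨i, hi⟩| := rfl
        _ ≤ ‖a‖ := hb
        _ ≤ 2*c*C := hna2
    · rw [hk1 i hi, abs_zero]; positivity
  set Fn : ℕ → ℝ := fun k => ∑ i, |lam k i| with hFn
  have hF : ∀ k i, |lam k i| ≤ Fn k := fun k i => by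
    simpa [hFn] using Finset.single_le_sum (f := fun j => |lam k j|)
      (fun j _ => abs_nonneg _) (Finset.mem_univ i)
  refine ⟨max (2*c*C) ((Finset.range (N+1)).sup' ⟨0, Finset.mem_range.mpr N.succ_pos⟩ Fn),
    fun k i => ?_⟩
  rcases le_or_gt k N with h | h
  · exact (hF k i).trans ((Finset.le_sup' Fn (Finset.mem_range.mpr (Nat.lt_succ_of_le h))).trans
      (le_max_right _ _))
  · exact (hkey k h.le i).trans (le_max_left _ _)
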